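/- arXiv:2509.16406 — 2 statements merged into one kernel-verified Lean document; each statement's English description precedes it below -/
import Mathlib

section
/- The special concavity property fails for the Monge–Ampère operator F = σ_n (the case k = n): for every n ≥ 2, every ε > 0, every diagonal matrix W = diag(λ₁,…,λ_n) with all λ_α > 0, and every symmetric matrix ξ whose only nonzero entry is ξ₁₁ ≠ 0, one has −(d²/dt²)|_{t=0} det(W + tξ) = 0, while (1+ε)·(det W/λ₁)·ξ₁₁²/λ₁ − ((det W/λ₁)·ξ₁₁)²/det W = ε·det W·ξ₁₁²/λ₁² > 0; in particular the inequality −(d²/dt²)|_{t=0} det(W+tξ) ≥ (1+ε)·(det W/λ₁)·ξ₁₁²/λ₁ − ((det W/λ₁)ξ₁₁)²/det W fails. -/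
open scoped Classical

noncomputable section

/-- The `j`-th elementary symmetric function of the family `κ` restricted to the
finite index set `s`; it is `1` for `j = 0`, and `0` for `j < 0` (or for `j`
larger than the cardinality of `s`). -/
def sigmaE {ι : Type*} (s : Finset ι) (j : ℤ) (κ : ι → ℝ) : ℝ :=
  if 0 ≤ j then ∑ t ∈ s.powersetCard j.toNat, ∏ i ∈ t, κ i else 0

/-- `σ_j(κ)`, the `j`-th elementary symmetric polynomial evaluated at `κ`. -/
def sigmaV {ι : Type*} [Fintype ι] (j : ℤ) (κ : ι → ℝ) : ℝ :=
  sigmaE Finset.univ j κ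

/-- `σ_j(κ|α)`: `σ_j` of `κ` with the `α`-th entry deleted. -/
def sigmaV1 {ι : Type*} [Fintype ι] [DecidableEq ι] (j : ℤ) (κ : ι → ℝ) (α : ι) : ℝ :=
  sigmaE (Finset.univ.erase α) j κ

/-- `σ_j(κ|αβ)`: `σ_j` of `κ` with the `α`-th and `β`-th entries deleted. -/
def sigmaV2 {ι : Type*} [Fintype ι] [DecidableEq ι] (j : ℤ) (κ : ι → ℝ) (α β : ι) : ℝ :=
  sigmaE ((Finset.univ.erase α).erase β) j κ

/-- `σ_j(A)` for a real `n × n` matrix `A`: the `j`-th elementary symmetric function of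
the eigenvalues of `A` when `A` is symmetric (= Hermitian over `ℝ`), junk value `0`
otherwise. -/
def sigmaMat {n : ℕ} (j : ℤ) (A : Matrix (Fin n) (Fin n) ℝ) : ℝ :=
  if h : A.IsHermitian then sigmaV j h.eigenvalues else 0

/-- The Hessian quotient operator `F(A) = σ_n(A)/σ_{n-k}(A)`. -/
def Fquot {n : ℕ} (k : ℕ) (A : Matrix (Fin n) (Fin n) ℝ) : ℝ :=
  sigmaMat (n : ℤ) A / sigmaMat ((n : ℤ) - (k : ℤ)) A

/-- the special concavity property fails for the Monge–Ampère operator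
`F = σ_n = det`. For every `n ≥ 2`, `ε > 0`, diagonal `W = diag(λ)` with positive entries
and symmetric `ξ` whose only nonzero entry is `ξ₁₁ ≠ 0`, one has
`-(d²/dt²)|₀ det(W+tξ) = 0` while
`(1+ε)(det W/λ₁)ξ₁₁²/λ₁ - ((det W/λ₁)ξ₁₁)²/det W = ε det W ξ₁₁²/λ₁² > 0`,
so the corresponding concavity inequality fails. -/
theorem stmt_3 (n : ℕ) (hn : 2 ≤ n) (ε : ℝ) (hε : 0 < ε)
    (lam : Fin n → ℝ) (hpos : ∀ α, 0 < lam α) :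
    let i0 : Fin n := ⟨0, by omega⟩
    let W : Matrix (Fin n) (Fin n) ℝ := Matrix.diagonal lam
    ∀ ξ : Matrix (Fin n) (Fin n) ℝ,
      ξ i0 i0 ≠ 0 → (∀ α β : Fin n, ¬(α = i0 ∧ β = i0) → ξ α β = 0) →
      (-(iteratedDeriv 2 (fun t : ℝ => (W + t • ξ).det) 0) = 0) ∧
      ((1 + ε) * (W.det / lam i0) * (ξ i0 i0) ^ 2 / lam i0
          - ((W.det / lam i0) * ξ i0 i0) ^ 2 / W.det
        = ε * W.det * (ξ i0 i0) ^ 2 / (lam i0) ^ 2) ∧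
      (0 < ε * W.det * (ξ i0 i0) ^ 2 / (lam i0) ^ 2) ∧
      ¬(-(iteratedDeriv 2 (fun t : ℝ => (W + t • ξ).det) 0)
          ≥ (1 + ε) * (W.det / lam i0) * (ξ i0 i0) ^ 2 / lam i0
            - ((W.det / lam i0) * ξ i0 i0) ^ 2 / W.det) := by
  intro i0 W ξ hne hzero
  -- the determinant function is affine in t
  have hdiag : ∀ t : ℝ, W + t • ξ = Matrix.diagonal (fun α => lam α + t * ξ α α) := by
    intro t
    ext α β
    by_cases h : α = β
    · subst h
      simp [W, Matrix.diagonal, Matrix.add_apply]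
    · have hz : ξ α β = 0 := by
        apply hzero
        rintro ⟨rfl, rfl⟩; exact h rfl
      simp [W, Matrix.diagonal, Matrix.add_apply, h, hz]
  set c : ℝ := ξ i0 i0 with hc
  set P : ℝ := ∏ α ∈ Finset.univ.erase i0, lam α with hP
  have hfun : (fun t : ℝ => (W + t • ξ).det) = fun t : ℝ => (c * P) * t + lam i0 * P := by
    funext t
    rw [hdiag t, Matrix.det_diagonal]
    rw [← Finset.mul_prod_erase Finset.univ _ (Finset.mem_univ i0)]
    have : ∏ α ∈ Finset.univ.erase i0, (lam α + t * ξ α α) = P := by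
      apply Finset.prod_congr rfl
      intro α hα
      have : ξ α α = 0 := by
        apply hzero
        rintro ⟨rfl, -⟩
        exact (Finset.mem_erase.mp hα).1 rfl
      simp [this]
    rw [this]; ring
  have hderiv0 : iteratedDeriv 2 (fun t : ℝ => (W + t • ξ).det) 0 = 0 := by
    rw [hfun, iteratedDeriv_succ', iteratedDeriv_succ', iteratedDeriv_zero]
    have h1 : (deriv fun t : ℝ => (c * P) * t + lam i0 * P) = fun _ : ℝ => c * P := by
      funext t
      have : HasDerivAt (fun t : ℝ => (c * P) * t + lam i0 * P) (c * P) t := by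
        simpa using ((hasDerivAt_id t).const_mul (c * P)).add_const (lam i0 * P)
      exact this.deriv
    rw [h1]
    simp
  have hdetW : W.det = ∏ α, lam α := Matrix.det_diagonal
  have hdetpos : 0 < W.det := by
    rw [hdetW]; exact Finset.prod_pos fun α _ => hpos α
  have hl : lam i0 ≠ 0 := (hpos i0).ne'
  have heq : (1 + ε) * (W.det / lam i0) * (ξ i0 i0) ^ 2 / lam i0
      - ((W.det / lam i0) * ξ i0 i0) ^ 2 / W.det
      = ε * W.det * (ξ i0 i0) ^ 2 / (lam i0) ^ 2 := by
    field_simp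
    ring
  have hposrhs : 0 < ε * W.det * (ξ i0 i0) ^ 2 / (lam i0) ^ 2 := by
    apply div_pos
    · have : (0:ℝ) < (ξ i0 i0) ^ 2 := by positivity
      positivity
    · positivity
  refine ⟨by rw [hderiv0]; ring, heq, hposrhs, ?_⟩
  rw [hderiv0, heq]
  intro h
  simp only [neg_zero] at h
  exact absurd (le_antisymm h (le_of_lt hposrhs)) (ne_of_gt hposrhs)
end
end

section
/- Let n ≥ 2 and 1 ≤ k ≤ n−1 and set α = n−k+1 (so α ≥ 2). There exist positive constants c and c' depending only on n and k such that for every κ ∈ ℝ^n with 0 < κ₁ ≤ κ₂ ≤ … ≤ κ_n: (i) σ_{k−1}(κ|α1)·κ_α ≥ c·σ_k(κ), and (ii) σ_{k−1}(κ|α1) ≥ c'·σ_{k−1}(κ|1). -/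
open scoped Classical

noncomputable section

def topEmb (n j : ℕ) (hj : j ≤ n) : Fin j ↪ Fin n :=
  ⟨fun x => ⟨n - j + x.val, by omega⟩, fun x y h => by
    simp only [Fin.mk.injEq] at h
    exact Fin.ext (by omega)⟩

lemma strictmono_add_le {j n : ℕ} (f : Fin j → Fin n) (hf : StrictMono f) :
    ∀ (d : ℕ) (x : Fin j) (h : x.val + d < j), (f x).val + d ≤ (f ⟨x.val + d, h⟩).val := by
  intro d
  induction d with
  | zero => intro x h; simp
  | succ d ih =>
    intro x h
    have h1 : x.val + d < j := by omega
    have h2 := ih x h1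
    have hlt : (⟨x.val + d, h1⟩ : Fin j) < ⟨x.val + d + 1, h⟩ := by
      simp [Fin.lt_def]
    have h3 : (f ⟨x.val + d, h1⟩).val < (f ⟨x.val + d + 1, h⟩).val := hf hlt
    show (f x).val + (d + 1) ≤ (f ⟨x.val + d + 1, h⟩).val
    omega

lemma val_orderEmbOfFin_le {n j : ℕ} (t : Finset (Fin n)) (ht : t.card = j) (x : Fin j) :
    (t.orderEmbOfFin ht x).val ≤ n - j + x.val := by
  have hj : j ≤ n := by
    have := Finset.card_le_univ t
    simpa [ht] using this
  have hx : x.val + (j - 1 - x.val) < j := by omega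
  have h1 := strictmono_add_le _ (t.orderEmbOfFin ht).strictMono (j - 1 - x.val) x hx
  have h2 : (t.orderEmbOfFin ht ⟨x.val + (j - 1 - x.val), hx⟩).val < n := Fin.is_lt _
  omega

lemma prod_le_top {n j : ℕ} (hj : j ≤ n) (κ : Fin n → ℝ) (h0 : ∀ i, 0 ≤ κ i)
    (hmono : ∀ i l : Fin n, i ≤ l → κ i ≤ κ l) (t : Finset (Fin n)) (ht : t.card = j) :
    ∏ i ∈ t, κ i ≤ ∏ x : Fin j, κ (topEmb n j hj x) := by
  have hmap : Finset.univ.map (t.orderEmbOfFin ht).toEmbedding = t := by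
    apply Finset.coe_injective
    simp [Finset.coe_map]
  calc ∏ i ∈ t, κ i
      = ∏ i ∈ Finset.univ.map (t.orderEmbOfFin ht).toEmbedding, κ i := by rw [hmap]
    _ = ∏ x : Fin j, κ (t.orderEmbOfFin ht x) := Finset.prod_map _ _ _
    _ ≤ ∏ x : Fin j, κ (topEmb n j hj x) := by
        refine Finset.prod_le_prod (fun _ _ => h0 _) (fun x _ => hmono _ _ ?_)
        rw [Fin.le_def]
        exact val_orderEmbOfFin_le t ht x

/-- inequalities (2.21): for `n ≥ 2`, `1 ≤ k ≤ n-1` and `α = n-k+1`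
(1-indexed; `α ≥ 2`), there are positive constants `c, c'` depending only on `n, k` such
that for every increasingly ordered positive `κ ∈ ℝⁿ`:
(i) `σ_{k-1}(κ|α1) κ_α ≥ c σ_k(κ)`, and (ii) `σ_{k-1}(κ|α1) ≥ c' σ_{k-1}(κ|1)`. -/
theorem stmt_9 (n k : ℕ) (hn : 2 ≤ n) (hk1 : 1 ≤ k) (hk2 : k ≤ n - 1) :
    ∃ c c' : ℝ, 0 < c ∧ 0 < c' ∧
      ∀ κ : Fin n → ℝ, 0 < κ ⟨0, by omega⟩ → (∀ i j : Fin n, i ≤ j → κ i ≤ κ j) →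
        let i0 : Fin n := ⟨0, by omega⟩
        let a : Fin n := ⟨n - k, by omega⟩
        sigmaV2 ((k : ℤ) - 1) κ a i0 * κ a ≥ c * sigmaV (k : ℤ) κ ∧
        sigmaV2 ((k : ℤ) - 1) κ a i0 ≥ c' * sigmaV1 ((k : ℤ) - 1) κ i0 := by
  obtain ⟨m, rfl⟩ : ∃ m, k = m + 1 := ⟨k - 1, by omega⟩
  have hch1 : (0 : ℝ) < (n.choose (m + 1) : ℝ) := by
    exact_mod_cast Nat.choose_pos (by omega)
  have hch2 : (0 : ℝ) < ((n - 1).choose m : ℝ) := by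
    exact_mod_cast Nat.choose_pos (by omega)
  refine ⟨(n.choose (m + 1) : ℝ)⁻¹, ((n - 1).choose m : ℝ)⁻¹, by positivity, by positivity,
    ?_⟩
  intro κ hpos hmono i0 a
  have h0 : ∀ i, 0 ≤ κ i := fun i =>
    le_of_lt (lt_of_lt_of_le hpos (hmono i0 i (by simp [i0, Fin.le_def])))
  have hjm : m ≤ n := by omega
  set P1 : ℝ := ∏ x : Fin m, κ (topEmb n m hjm x) with hP1
  have hP1nonneg : 0 ≤ P1 := Finset.prod_nonneg fun _ _ => h0 _
  -- toNat computation
  have htn : ((((m + 1 : ℕ)) : ℤ) - 1).toNat = m := by omega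
  have hV2eq : sigmaV2 (((m + 1 : ℕ) : ℤ) - 1) κ a i0
      = ∑ t ∈ ((Finset.univ.erase a).erase i0).powersetCard m, ∏ i ∈ t, κ i := by
    rw [sigmaV2, sigmaE, if_pos (by push_cast; omega), htn]
  have hV1eq : sigmaV1 (((m + 1 : ℕ) : ℤ) - 1) κ i0
      = ∑ t ∈ (Finset.univ.erase i0).powersetCard m, ∏ i ∈ t, κ i := by
    rw [sigmaV1, sigmaE, if_pos (by push_cast; omega), htn]
  have hVeq : sigmaV ((m + 1 : ℕ) : ℤ) κ
      = ∑ t ∈ (Finset.univ : Finset (Fin n)).powersetCard (m + 1), ∏ i ∈ t, κ i := by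
    rw [sigmaV, sigmaE, if_pos (by positivity)]
    norm_num
  -- T1 is a term of sigmaV2
  have hT1mem : Finset.univ.map (topEmb n m hjm)
      ∈ ((Finset.univ.erase a).erase i0).powersetCard m := by
    rw [Finset.mem_powersetCard]
    refine ⟨fun i hi => ?_, by simp⟩
    rw [Finset.mem_map] at hi
    obtain ⟨x, -, rfl⟩ := hi
    have hx := x.2
    simp only [Finset.mem_erase, Finset.mem_erase, Finset.mem_univ, and_true]
    constructor
    · intro h
      have := congrArg Fin.val h
      change n - m + x.val = 0 at this
      omega
    · intro h
      have := congrArg Fin.val h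
      change n - m + x.val = n - (m + 1) at this
      omega
  have hA : P1 ≤ sigmaV2 (((m + 1 : ℕ) : ℤ) - 1) κ a i0 := by
    rw [hV2eq]
    have := Finset.single_le_sum (f := fun t => ∏ i ∈ t, κ i)
      (fun t _ => Finset.prod_nonneg fun i _ => h0 i) hT1mem
    calc P1 = ∏ i ∈ Finset.univ.map (topEmb n m hjm), κ i := (Finset.prod_map _ _ _).symm
      _ ≤ _ := this
  -- every (m+1)-subset product is ≤ κ a * P1
  have hsplit : ∏ x : Fin (m + 1), κ (topEmb n (m + 1) (by omega) x) = κ a * P1 := by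
    rw [Fin.prod_univ_succ]
    congr 1
    refine Finset.prod_congr rfl fun x _ => ?_
    congr 1
    refine Fin.ext ?_
    show n - (m + 1) + (x.val + 1) = n - m + x.val
    omega
  have hBound : ∀ t ∈ (Finset.univ : Finset (Fin n)).powersetCard (m + 1),
      ∏ i ∈ t, κ i ≤ κ a * P1 := by
    intro t htmem
    rw [Finset.mem_powersetCard] at htmem
    exact (prod_le_top (by omega) κ h0 hmono t htmem.2).trans_eq hsplit
  have hsum : sigmaV ((m + 1 : ℕ) : ℤ) κ ≤ (n.choose (m + 1) : ℝ) * (κ a * P1) := by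
    rw [hVeq]
    calc ∑ t ∈ (Finset.univ : Finset (Fin n)).powersetCard (m + 1), ∏ i ∈ t, κ i
        ≤ ((Finset.univ : Finset (Fin n)).powersetCard (m + 1)).card • (κ a * P1) :=
          Finset.sum_le_card_nsmul _ _ _ hBound
      _ = (n.choose (m + 1) : ℝ) * (κ a * P1) := by
          simp [Finset.card_powersetCard, nsmul_eq_mul]
  -- every m-subset product is ≤ P1
  have hBound1 : ∀ t ∈ (Finset.univ.erase i0).powersetCard m,
      ∏ i ∈ t, κ i ≤ P1 := by
    intro t htmem
    rw [Finset.mem_powersetCard] at htmem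
    exact prod_le_top hjm κ h0 hmono t htmem.2
  have hsum1 : sigmaV1 (((m + 1 : ℕ) : ℤ) - 1) κ i0 ≤ ((n - 1).choose m : ℝ) * P1 := by
    rw [hV1eq]
    calc ∑ t ∈ (Finset.univ.erase i0).powersetCard m, ∏ i ∈ t, κ i
        ≤ ((Finset.univ.erase i0).powersetCard m).card • P1 :=
          Finset.sum_le_card_nsmul _ _ _ hBound1
      _ = ((n - 1).choose m : ℝ) * P1 := by
          simp [Finset.card_powersetCard, nsmul_eq_mul, Finset.card_erase_of_mem]
  constructor
  · have h1 : (n.choose (m + 1) : ℝ)⁻¹ * sigmaV ((m + 1 : ℕ) : ℤ) κ ≤ κ a * P1 := by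
      rw [inv_mul_le_iff₀ hch1]
      exact hsum
    have h2 : κ a * P1 ≤ sigmaV2 (((m + 1 : ℕ) : ℤ) - 1) κ a i0 * κ a := by
      rw [mul_comm]
      exact mul_le_mul_of_nonneg_right hA (h0 a)
    exact le_trans h1 h2
  · have h1 : ((n - 1).choose m : ℝ)⁻¹ * sigmaV1 (((m + 1 : ℕ) : ℤ) - 1) κ i0 ≤ P1 := by
      rw [inv_mul_le_iff₀ hch2]
      exact hsum1
    exact le_trans h1 hA
end
end
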